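/- Let U = (1/√2)(I ⊗ I - i Z_N ⊗ Z_M) acting on ℂ^{2N} ⊗ ℂ^{2M}. Then U is a symmetric unitary (Uᵀ = U, U*U = I) and for all X ∈ M_{2N}(ℂ) and Y ∈ M_{2M}(ℂ), U*(X^♯ ⊗ Y^♯)U = (U*(X ⊗ Y)U)ᵀ. In other words, the tensor product of two dual operations is conjugate via U to the transpose. -/
import Mathlib

open Matrix Kronecker

noncomputable def Zmat (K : ℕ) : Matrix (Fin K ⊕ Fin K) (Fin K ⊕ Fin K) ℂ :=
  Matrix.fromBlocks 0 1 (-1) 0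

noncomputable def dual {K : ℕ} (X : Matrix (Fin K ⊕ Fin K) (Fin K ⊕ Fin K) ℂ) :
    Matrix (Fin K ⊕ Fin K) (Fin K ⊕ Fin K) ℂ :=
  -(Zmat K) * Xᵀ * (Zmat K)

lemma Zmat_transpose (K : ℕ) : (Zmat K)ᵀ = -(Zmat K) := by
  simp [Zmat, Matrix.fromBlocks_transpose, Matrix.fromBlocks_neg]

lemma Zmat_sq (K : ℕ) : Zmat K * Zmat K = -1 := by
  rw [show (-1 : Matrix (Fin K ⊕ Fin K) (Fin K ⊕ Fin K) ℂ)
      = Matrix.fromBlocks (-1) (-0) (-0) (-1) by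
    rw [← Matrix.fromBlocks_neg, Matrix.fromBlocks_one]]
  simp [Zmat, Matrix.fromBlocks_multiply]

lemma Zmat_conjTranspose (K : ℕ) : (Zmat K)ᴴ = -(Zmat K) := by
  simp [Zmat, Matrix.fromBlocks_conjTranspose, Matrix.fromBlocks_neg]

lemma neg_kronecker_neg {l m n p : Type*} (A : Matrix l m ℂ) (B : Matrix n p ℂ) :
    (-A) ⊗ₖ (-B) = A ⊗ₖ B := by
  ext i j; simp

lemma key_ring {R : Type*} [Ring R] (W A : R) (h : W * W = -1) :
    (1 + W) * (W * A * W) * (1 - W) = -((1 - W) * A * (1 + W)) := by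
  have h2 : ∀ B : R, W * (W * B) = -B := fun B => by
    rw [← mul_assoc, h, neg_one_mul]
  have h3 : ∀ B : R, B * (W * W) = -B := fun B => by
    rw [h, mul_neg_one]
  simp only [mul_sub, sub_mul, mul_add, add_mul, mul_one, one_mul, mul_assoc, h2, h3,
    mul_neg, neg_mul, neg_neg, neg_add, neg_sub]
  abel

lemma kronecker_conjT {l n : Type*} (A : Matrix l l ℂ) (B : Matrix n n ℂ) :
    (A ⊗ₖ B)ᴴ = Aᴴ ⊗ₖ Bᴴ := by
  ext i j
  simp [Matrix.conjTranspose_apply, mul_comm]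

theorem tensor_of_duals_is_transpose {N M : ℕ} :
    let U : Matrix ((Fin N ⊕ Fin N) × (Fin M ⊕ Fin M)) ((Fin N ⊕ Fin N) × (Fin M ⊕ Fin M)) ℂ :=
      ((Real.sqrt 2 : ℂ)⁻¹) • ((1 : Matrix _ _ ℂ) ⊗ₖ (1 : Matrix _ _ ℂ)
        - Complex.I • (Zmat N ⊗ₖ Zmat M))
    Uᵀ = U ∧ Uᴴ * U = 1 ∧
    ∀ (X : Matrix (Fin N ⊕ Fin N) (Fin N ⊕ Fin N) ℂ)
      (Y : Matrix (Fin M ⊕ Fin M) (Fin M ⊕ Fin M) ℂ),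
      Uᴴ * (dual X ⊗ₖ dual Y) * U = (Uᴴ * (X ⊗ₖ Y) * U)ᵀ := by
  intro U
  set Z : Matrix ((Fin N ⊕ Fin N) × (Fin M ⊕ Fin M)) ((Fin N ⊕ Fin N) × (Fin M ⊕ Fin M)) ℂ :=
    Zmat N ⊗ₖ Zmat M with hZdef
  have hZt : Zᵀ = Z := by
    rw [hZdef, ← Matrix.kroneckerMap_transpose, Zmat_transpose, Zmat_transpose,
      neg_kronecker_neg]
  have hZh : Zᴴ = Z := by
    rw [hZdef, kronecker_conjT, Zmat_conjTranspose, Zmat_conjTranspose, neg_kronecker_neg]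
  have hZsq : Z * Z = 1 := by
    rw [hZdef, ← Matrix.mul_kronecker_mul, Zmat_sq, Zmat_sq, neg_kronecker_neg,
      Matrix.one_kronecker_one]
  set W : Matrix _ _ ℂ := Complex.I • Z with hWdef
  have hWsq : W * W = -1 := by
    rw [hWdef, smul_mul_assoc, mul_smul_comm, smul_smul, Complex.I_mul_I, hZsq, neg_one_smul]
  have hWt : Wᵀ = W := by rw [hWdef, Matrix.transpose_smul, hZt]
  set c : ℂ := (Real.sqrt 2 : ℂ)⁻¹ with hc
  have hcs : star c = c := by
    simp [hc, ← Complex.ofReal_inv, Complex.conj_ofReal]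
  have hcc : c * c = 2⁻¹ := by
    rw [hc, ← mul_inv, ← Complex.ofReal_mul, Real.mul_self_sqrt (by norm_num)]
    norm_num
  have hU : U = c • (1 - W) := by
    show c • ((1 : Matrix _ _ ℂ) ⊗ₖ (1 : Matrix _ _ ℂ) - W) = _
    rw [Matrix.one_kronecker_one]
  have hUh : Uᴴ = c • (1 + W) := by
    rw [hU, Matrix.conjTranspose_smul, hcs, Matrix.conjTranspose_sub, Matrix.conjTranspose_one,
      hWdef, Matrix.conjTranspose_smul, hZh, Complex.star_def, Complex.conj_I, neg_smul,
      sub_neg_eq_add]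
  refine ⟨?_, ?_, ?_⟩
  · rw [hU, Matrix.transpose_smul, Matrix.transpose_sub, Matrix.transpose_one, hWt]
  · rw [hUh, hU, smul_mul_assoc, mul_smul_comm, smul_smul, hcc]
    have h11 : ((1 : Matrix _ _ ℂ) + W) * (1 - W) = 1 + 1 := by
      rw [add_mul, one_mul, mul_sub, mul_one, hWsq, sub_neg_eq_add]
      abel
    rw [h11, ← two_smul ℂ, smul_smul]
    norm_num
  · intro X Y
    have hdual : dual X ⊗ₖ dual Y = Z * (X ⊗ₖ Y)ᵀ * Z := by
      show ((-(Zmat N) * Xᵀ) * Zmat N) ⊗ₖ ((-(Zmat M) * Yᵀ) * Zmat M) = _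
      rw [Matrix.mul_kronecker_mul, Matrix.mul_kronecker_mul, neg_kronecker_neg,
        Matrix.kroneckerMap_transpose, hZdef]
    set T : Matrix _ _ ℂ := X ⊗ₖ Y with hT
    have hZTZ : Z * Tᵀ * Z = -(W * Tᵀ * W) := by
      rw [hWdef, smul_mul_assoc, smul_mul_assoc, mul_smul_comm, smul_smul, Complex.I_mul_I,
        neg_one_smul, neg_neg]
    have hsm : ∀ A : Matrix _ _ ℂ,
        (c • ((1 : Matrix _ _ ℂ) + W)) * A * (c • (1 - W)) = (c * c) • ((1 + W) * A * (1 - W)) := by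
      intro A
      rw [smul_mul_assoc, smul_mul_assoc, mul_smul_comm, smul_smul]
    rw [hdual, hZTZ, hUh, hU, hsm, hsm, Matrix.transpose_smul, Matrix.transpose_mul,
      Matrix.transpose_mul, Matrix.transpose_sub, Matrix.transpose_add, Matrix.transpose_one, hWt]
    congr 1
    rw [mul_neg, neg_mul, key_ring W Tᵀ hWsq, neg_neg, mul_assoc]
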